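/- If the input set X ⊆ ℝⁿ is a finite union of polyhedra (each defined by finitely many strict or non-strict linear inequalities), then the output reachable set ReLU''(X) of the componentwise ReLU is also a finite union of such polyhedra. -/

import Mathlib

def relu (n : ℕ) (x : Fin n → ℝ) : Fin n → ℝ := fun i => max (x i) 0

/-- A generalized polyhedron: finitely many non-strict and strict linear inequalities. -/
def genPoly (n k k' : ℕ) (a : Fin k → Fin n → ℝ) (b : Fin k → ℝ)
    (c : Fin k' → Fin n → ℝ) (d : Fin k' → ℝ) : Set (Fin n → ℝ) :=
  {x | (∀ j, ∑ i, a j i * x i ≤ b j) ∧ (∀ j, ∑ i, c j i * x i < d j)}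

namespace ReluSL



variable {m : ℕ}

abbrev Constr (m : ℕ) := (Fin m → ℝ) × ℝ
noncomputable def evalC (q : Constr m) (x : Fin m → ℝ) : ℝ := ∑ i, q.1 i * x i
abbrev Poly (m : ℕ) := List (Constr m) × List (Constr m)
def Poly.set (p : Poly m) : Set (Fin m → ℝ) :=
  {x | (∀ q ∈ p.1, evalC q x ≤ q.2) ∧ (∀ q ∈ p.2, evalC q x < q.2)}

noncomputable def Ef (i0 : Fin m) (y : Fin m → ℝ) (q : Constr m) : ℝ :=
  evalC q y - q.1 i0 * y i0

noncomputable def Bv (i0 : Fin m) (y : Fin m → ℝ) (q : Constr m) : ℝ :=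
  (q.2 - Ef i0 y q) / q.1 i0

lemma evalC_update (q : Constr m) (i0 : Fin m) (y : Fin m → ℝ) (t : ℝ) :
    evalC q (Function.update y i0 t) = Ef i0 y q + q.1 i0 * t := by
  unfold evalC Ef
  have h : ∀ i : Fin m, q.1 i * (Function.update y i0 t i) =
      q.1 i * y i + (if i = i0 then q.1 i0 * (t - y i0) else 0) := by
    intro i
    rcases eq_or_ne i i0 with h | h
    · subst h; simp [Function.update_apply]; ring
    · simp [Function.update_apply, h]
  simp only [h, Finset.sum_add_distrib, Finset.sum_ite_eq' Finset.univ i0, Finset.mem_univ,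
    if_true]
  unfold evalC
  ring

noncomputable def comb (i0 : Fin m) (q q' : Constr m) : Constr m :=
  (fun i => q'.1 i0 * q.1 i - q.1 i0 * q'.1 i, q'.1 i0 * q.2 - q.1 i0 * q'.2)

lemma evalC_comb (i0 : Fin m) (q q' : Constr m) (y : Fin m → ℝ) :
    evalC (comb i0 q q') y = q'.1 i0 * evalC q y - q.1 i0 * evalC q' y := by
  unfold evalC comb
  rw [Finset.mul_sum, Finset.mul_sum, ← Finset.sum_sub_distrib]
  exact Finset.sum_congr rfl fun i _ => by ring

lemma Ef_comb (i0 : Fin m) (q q' : Constr m) (y : Fin m → ℝ) :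
    q'.1 i0 * Ef i0 y q - q.1 i0 * Ef i0 y q' = evalC (comb i0 q q') y := by
  rw [evalC_comb]; unfold Ef; ring

noncomputable def elim (i0 : Fin m) (p : Poly m) : Poly m :=
  ((p.1.filter fun q => decide (q.1 i0 = 0)) ++
     ((p.1.filter fun q => decide (q.1 i0 < 0)).flatMap fun q =>
       (p.1.filter fun q => decide (0 < q.1 i0)).map fun q' => comb i0 q q'),
   (p.2.filter fun q => decide (q.1 i0 = 0)) ++
     ((p.1.filter fun q => decide (q.1 i0 < 0)).flatMap fun q =>
       (p.2.filter fun q => decide (0 < q.1 i0)).map fun q' => comb i0 q q') ++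
     ((p.2.filter fun q => decide (q.1 i0 < 0)).flatMap fun q =>
       (p.1.filter fun q => decide (0 < q.1 i0)).map fun q' => comb i0 q q') ++
     ((p.2.filter fun q => decide (q.1 i0 < 0)).flatMap fun q =>
       (p.2.filter fun q => decide (0 < q.1 i0)).map fun q' => comb i0 q q'))

lemma fm_le_le {al au E E' b b' t : ℝ} (hal : al < 0) (hau : 0 < au)
    (h1 : E + al * t ≤ b) (h2 : E' + au * t ≤ b') :
    au * E - al * E' ≤ au * b - al * b' := by nlinarith
lemma fm_le_lt {al au E E' b b' t : ℝ} (hal : al < 0) (hau : 0 < au)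
    (h1 : E + al * t ≤ b) (h2 : E' + au * t < b') :
    au * E - al * E' < au * b - al * b' := by nlinarith
lemma fm_lt_le {al au E E' b b' t : ℝ} (hal : al < 0) (hau : 0 < au)
    (h1 : E + al * t < b) (h2 : E' + au * t ≤ b') :
    au * E - al * E' < au * b - al * b' := by nlinarith
lemma fm_lt_lt {al au E E' b b' t : ℝ} (hal : al < 0) (hau : 0 < au)
    (h1 : E + al * t < b) (h2 : E' + au * t < b') :
    au * E - al * E' < au * b - al * b' := by nlinarith

lemma pair_div_le {al au E E' b b' : ℝ} (hal : al < 0) (hau : 0 < au)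
    (h : au * E - al * E' ≤ au * b - al * b') : (b - E) / al ≤ (b' - E') / au := by
  rw [show (b - E) / al = (E - b) / (-al) by rw [div_neg, ← neg_div, neg_sub],
    div_le_div_iff₀ (neg_pos.2 hal) hau]
  nlinarith
lemma pair_div_lt {al au E E' b b' : ℝ} (hal : al < 0) (hau : 0 < au)
    (h : au * E - al * E' < au * b - al * b') : (b - E) / al < (b' - E') / au := by
  rw [show (b - E) / al = (E - b) / (-al) by rw [div_neg, ← neg_div, neg_sub],
    div_lt_div_iff₀ (neg_pos.2 hal) hau]
  nlinarith

lemma le_upper {au E b t : ℝ} (hau : 0 < au) (h : t ≤ (b - E) / au) : E + au * t ≤ b := by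
  rw [le_div_iff₀ hau] at h; linarith
lemma lt_upper {au E b t : ℝ} (hau : 0 < au) (h : t < (b - E) / au) : E + au * t < b := by
  rw [lt_div_iff₀ hau] at h; linarith
lemma le_lower {al E b t : ℝ} (hal : al < 0) (h : (b - E) / al ≤ t) : E + al * t ≤ b := by
  rw [div_le_iff_of_neg hal] at h; linarith
lemma lt_lower {al E b t : ℝ} (hal : al < 0) (h : (b - E) / al < t) : E + al * t < b := by
  rw [div_lt_iff_of_neg hal] at h; linarith





lemma list_exists_max : ∀ (l : List ℝ), l ≠ [] → ∃ M ∈ l, ∀ v ∈ l, v ≤ M := by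
  intro l
  induction l with
  | nil => intro h; exact absurd rfl h
  | cons a l ih =>
    intro _
    rcases eq_or_ne l [] with rfl | hl
    · exact ⟨a, by simp⟩
    · obtain ⟨M, hM, hMax⟩ := ih hl
      rcases max_choice a M with h | h
      · exact ⟨max a M, by simp [h], by
          intro v hv
          rcases List.mem_cons.1 hv with rfl | hv
          · exact le_max_left _ _
          · exact le_trans (hMax v hv) (le_max_right _ _)⟩
      · exact ⟨max a M, by simp [h, hM], by
          intro v hv
          rcases List.mem_cons.1 hv with rfl | hv
          · exact le_max_left _ _
          · exact le_trans (hMax v hv) (le_max_right _ _)⟩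

lemma list_exists_min (l : List ℝ) (h : l ≠ []) : ∃ M ∈ l, ∀ v ∈ l, M ≤ v := by
  obtain ⟨M, hM, hMax⟩ := list_exists_max (l.map (fun x => -x)) (by simpa using h)
  obtain ⟨M', hM', rfl⟩ := List.mem_map.1 hM
  exact ⟨M', hM', fun v hv => by
    have := hMax (-v) (List.mem_map.2 ⟨v, hv, rfl⟩); linarith⟩

lemma exists_between (Lns Lst Uns Ust : List ℝ)
    (h1 : ∀ v ∈ Lns, ∀ w ∈ Uns, v ≤ w)
    (h2 : ∀ v ∈ Lns, ∀ w ∈ Ust, v < w)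
    (h3 : ∀ v ∈ Lst, ∀ w ∈ Uns, v < w)
    (h4 : ∀ v ∈ Lst, ∀ w ∈ Ust, v < w) :
    ∃ t : ℝ, (∀ v ∈ Lns, v ≤ t) ∧ (∀ v ∈ Lst, v < t) ∧
      (∀ w ∈ Uns, t ≤ w) ∧ (∀ w ∈ Ust, t < w) := by
  rcases eq_or_ne (Lns ++ Lst) [] with hL | hL
  · -- no lower bounds
    obtain ⟨e1, e2⟩ := List.append_eq_nil_iff.1 hL
    subst e1; subst e2
    rcases eq_or_ne (Uns ++ Ust) [] with hU | hU
    · obtain ⟨e1, e2⟩ := List.append_eq_nil_iff.1 hU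
      subst e1; subst e2
      exact ⟨0, by simp⟩
    · obtain ⟨u, hu, humin⟩ := list_exists_min _ hU
      refine ⟨u - 1, by simp, by simp, ?_, ?_⟩
      · intro w hw
        have := humin w (List.mem_append.2 (Or.inl hw)); linarith
      · intro w hw
        have := humin w (List.mem_append.2 (Or.inr hw)); linarith
  · obtain ⟨M, hM, hMax⟩ := list_exists_max _ hL
    by_cases hs : ∃ w ∈ Lst, M ≤ w
    · obtain ⟨w0, hw0, hw0M⟩ := hs
      have hups : ∀ u ∈ Uns ++ Ust, w0 < u := by
        intro u hu
        rcases List.mem_append.1 hu with hu | hu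
        · exact h3 w0 hw0 u hu
        · exact h4 w0 hw0 u hu
      rcases eq_or_ne (Uns ++ Ust) [] with hU | hU
      · obtain ⟨e1, e2⟩ := List.append_eq_nil_iff.1 hU
        subst e1; subst e2
        refine ⟨M + 1, ?_, ?_, by simp, by simp⟩
        · intro v hv; have := hMax v (List.mem_append.2 (Or.inl hv)); linarith
        · intro v hv; have := hMax v (List.mem_append.2 (Or.inr hv)); linarith
      · obtain ⟨u, hu, humin⟩ := list_exists_min _ hU
        have hwu : w0 < u := hups u hu
        have hMw0 : M = w0 := le_antisymm hw0M (hMax w0 (List.mem_append.2 (Or.inr hw0)))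
        refine ⟨(w0 + u) / 2, ?_, ?_, ?_, ?_⟩
        · intro v hv
          have := hMax v (List.mem_append.2 (Or.inl hv)); rw [hMw0] at this; linarith
        · intro v hv
          have := hMax v (List.mem_append.2 (Or.inr hv)); rw [hMw0] at this; linarith
        · intro w hw; have := humin w (List.mem_append.2 (Or.inl hw)); linarith
        · intro w hw; have := humin w (List.mem_append.2 (Or.inr hw)); linarith
    · push_neg at hs
      have hMns : M ∈ Lns := by
        rcases List.mem_append.1 hM with h | h
        · exact h
        · exact absurd le_rfl (not_le.2 (hs M h))
      refine ⟨M, ?_, ?_, h1 M hMns, h2 M hMns⟩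
      · intro v hv; exact hMax v (List.mem_append.2 (Or.inl hv))
      · intro v hv; exact hs v hv


lemma elim_set (i0 : Fin m) (p : Poly m) (y : Fin m → ℝ) :
    y ∈ (elim i0 p).set ↔ ∃ t, Function.update y i0 t ∈ p.set := by
  constructor
  · rintro ⟨hns, hst⟩
    simp only [elim, List.mem_append] at hns hst
    have hA : ∀ v ∈ (p.1.filter fun q => decide (q.1 i0 < 0)).map (Bv i0 y),
        ∀ w ∈ (p.1.filter fun q => decide (0 < q.1 i0)).map (Bv i0 y), v ≤ w := by
      intro v hv w hw
      obtain ⟨q, hq, rfl⟩ := List.mem_map.1 hv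
      obtain ⟨q', hq', rfl⟩ := List.mem_map.1 hw
      have hal : q.1 i0 < 0 := by simpa using (List.mem_filter.1 hq).2
      have hau : 0 < q'.1 i0 := by simpa using (List.mem_filter.1 hq').2
      have hc := hns _ (Or.inr (List.mem_flatMap.2 ⟨q, hq, List.mem_map.2 ⟨q', hq', rfl⟩⟩))
      rw [← Ef_comb] at hc
      exact pair_div_le hal hau hc
    have hB : ∀ v ∈ (p.1.filter fun q => decide (q.1 i0 < 0)).map (Bv i0 y),
        ∀ w ∈ (p.2.filter fun q => decide (0 < q.1 i0)).map (Bv i0 y), v < w := by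
      intro v hv w hw
      obtain ⟨q, hq, rfl⟩ := List.mem_map.1 hv
      obtain ⟨q', hq', rfl⟩ := List.mem_map.1 hw
      have hal : q.1 i0 < 0 := by simpa using (List.mem_filter.1 hq).2
      have hau : 0 < q'.1 i0 := by simpa using (List.mem_filter.1 hq').2
      have hc := hst _ (Or.inl (Or.inl (Or.inr
        (List.mem_flatMap.2 ⟨q, hq, List.mem_map.2 ⟨q', hq', rfl⟩⟩))))
      rw [← Ef_comb] at hc
      exact pair_div_lt hal hau hc
    have hC : ∀ v ∈ (p.2.filter fun q => decide (q.1 i0 < 0)).map (Bv i0 y),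
        ∀ w ∈ (p.1.filter fun q => decide (0 < q.1 i0)).map (Bv i0 y), v < w := by
      intro v hv w hw
      obtain ⟨q, hq, rfl⟩ := List.mem_map.1 hv
      obtain ⟨q', hq', rfl⟩ := List.mem_map.1 hw
      have hal : q.1 i0 < 0 := by simpa using (List.mem_filter.1 hq).2
      have hau : 0 < q'.1 i0 := by simpa using (List.mem_filter.1 hq').2
      have hc := hst _ (Or.inl (Or.inr
        (List.mem_flatMap.2 ⟨q, hq, List.mem_map.2 ⟨q', hq', rfl⟩⟩)))
      rw [← Ef_comb] at hc
      exact pair_div_lt hal hau hc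
    have hD : ∀ v ∈ (p.2.filter fun q => decide (q.1 i0 < 0)).map (Bv i0 y),
        ∀ w ∈ (p.2.filter fun q => decide (0 < q.1 i0)).map (Bv i0 y), v < w := by
      intro v hv w hw
      obtain ⟨q, hq, rfl⟩ := List.mem_map.1 hv
      obtain ⟨q', hq', rfl⟩ := List.mem_map.1 hw
      have hal : q.1 i0 < 0 := by simpa using (List.mem_filter.1 hq).2
      have hau : 0 < q'.1 i0 := by simpa using (List.mem_filter.1 hq').2
      have hc := hst _ (Or.inr (List.mem_flatMap.2 ⟨q, hq, List.mem_map.2 ⟨q', hq', rfl⟩⟩))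
      rw [← Ef_comb] at hc
      exact pair_div_lt hal hau hc
    obtain ⟨t, hLns, hLst, hUns, hUst⟩ := exists_between _ _ _ _ hA hB hC hD
    refine ⟨t, ?_, ?_⟩
    · intro q hq
      rcases lt_trichotomy (q.1 i0) 0 with hal | hz | hau
      · have hqf : q ∈ p.1.filter fun q => decide (q.1 i0 < 0) :=
          List.mem_filter.2 ⟨hq, by simpa using hal⟩
      
        have hb := hLns _ (List.mem_map.2 ⟨q, hqf, rfl⟩)
        rw [evalC_update]
        exact le_lower hal hb
      · have hqf : q ∈ p.1.filter fun q => decide (q.1 i0 = 0) :=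
          List.mem_filter.2 ⟨hq, by simpa using hz⟩
        have h0 := hns q (Or.inl hqf)
        rw [evalC_update]
        unfold Ef
        rw [hz]
        simpa using h0
      · have hqf : q ∈ p.1.filter fun q => decide (0 < q.1 i0) :=
          List.mem_filter.2 ⟨hq, by simpa using hau⟩
        have hb := hUns _ (List.mem_map.2 ⟨q, hqf, rfl⟩)
        rw [evalC_update]
        exact le_upper hau hb
    · intro q hq
      rcases lt_trichotomy (q.1 i0) 0 with hal | hz | hau
      · have hqf : q ∈ p.2.filter fun q => decide (q.1 i0 < 0) :=
          List.mem_filter.2 ⟨hq, by simpa using hal⟩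
        have hb := hLst _ (List.mem_map.2 ⟨q, hqf, rfl⟩)
        rw [evalC_update]
        exact lt_lower hal hb
      · have hqf : q ∈ p.2.filter fun q => decide (q.1 i0 = 0) :=
          List.mem_filter.2 ⟨hq, by simpa using hz⟩
        have h0 := hst q (Or.inl (Or.inl (Or.inl hqf)))
        rw [evalC_update]
        unfold Ef
        rw [hz]
        simpa using h0
      · have hqf : q ∈ p.2.filter fun q => decide (0 < q.1 i0) :=
          List.mem_filter.2 ⟨hq, by simpa using hau⟩
        have hb := hUst _ (List.mem_map.2 ⟨q, hqf, rfl⟩)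
        rw [evalC_update]
        exact lt_upper hau hb
  · rintro ⟨t, hns, hst⟩
    constructor
    · intro r hr
      simp only [elim, List.mem_append, List.mem_flatMap, List.mem_map, List.mem_filter,
        decide_eq_true_eq] at hr
      rcases hr with ⟨hq, hz⟩ | ⟨q, ⟨hq, hal⟩, q', ⟨hq', hau⟩, rfl⟩
      · have h0 := hns r hq
        rw [evalC_update] at h0
        unfold Ef at h0
        rw [hz] at h0
        simpa using h0
      · have h1 := hns q hq
        have h2 := hns q' hq'
        rw [evalC_update] at h1 h2
        show evalC (comb i0 q q') y ≤ q'.1 i0 * q.2 - q.1 i0 * q'.2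
        rw [← Ef_comb]
        exact fm_le_le hal hau h1 h2
    · intro r hr
      simp only [elim, List.mem_append, List.mem_flatMap, List.mem_map, List.mem_filter,
        decide_eq_true_eq] at hr
      rcases hr with ((⟨hq, hz⟩ | ⟨q, ⟨hq, hal⟩, q', ⟨hq', hau⟩, rfl⟩) |
          ⟨q, ⟨hq, hal⟩, q', ⟨hq', hau⟩, rfl⟩) | ⟨q, ⟨hq, hal⟩, q', ⟨hq', hau⟩, rfl⟩
      · have h0 := hst r hq
        rw [evalC_update] at h0
        unfold Ef at h0
        rw [hz] at h0
        simpa using h0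
      · have h1 := hns q hq
        have h2 := hst q' hq'
        rw [evalC_update] at h1 h2
        show evalC (comb i0 q q') y < q'.1 i0 * q.2 - q.1 i0 * q'.2
        rw [← Ef_comb]
        exact fm_le_lt hal hau h1 h2
      · have h1 := hst q hq
        have h2 := hns q' hq'
        rw [evalC_update] at h1 h2
        show evalC (comb i0 q q') y < q'.1 i0 * q.2 - q.1 i0 * q'.2
        rw [← Ef_comb]
        exact fm_lt_le hal hau h1 h2
      · have h1 := hst q hq
        have h2 := hst q' hq'
        rw [evalC_update] at h1 h2
        show evalC (comb i0 q q') y < q'.1 i0 * q.2 - q.1 i0 * q'.2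
        rw [← Ef_comb]
        exact fm_lt_lt hal hau h1 h2









def uSet (P : List (Poly m)) : Set (Fin m → ℝ) := {x | ∃ p ∈ P, x ∈ p.set}

def IsSL (S : Set (Fin m → ℝ)) : Prop := ∃ P : List (Poly m), S = uSet P

lemma IsSL.union {S T : Set (Fin m → ℝ)} (hS : IsSL S) (hT : IsSL T) : IsSL (S ∪ T) := by
  obtain ⟨P, rfl⟩ := hS; obtain ⟨Q, rfl⟩ := hT
  exact ⟨P ++ Q, by ext x; simp [uSet, or_and_right, exists_or]⟩

lemma IsSL.empty : IsSL (∅ : Set (Fin m → ℝ)) := ⟨[], by ext x; simp [uSet]⟩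

def Poly.inter (p q : Poly m) : Poly m := (p.1 ++ q.1, p.2 ++ q.2)

lemma Poly.inter_set (p q : Poly m) : (p.inter q).set = p.set ∩ q.set := by
  ext x
  simp only [Poly.set, Poly.inter, Set.mem_setOf_eq, Set.mem_inter_iff, List.mem_append]
  constructor
  · rintro ⟨h1, h2⟩
    exact ⟨⟨fun r hr => h1 r (Or.inl hr), fun r hr => h2 r (Or.inl hr)⟩,
      ⟨fun r hr => h1 r (Or.inr hr), fun r hr => h2 r (Or.inr hr)⟩⟩
  · rintro ⟨⟨h1, h2⟩, h3, h4⟩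
    exact ⟨fun r hr => hr.elim (h1 r) (h3 r), fun r hr => hr.elim (h2 r) (h4 r)⟩

lemma IsSL.inter {S T : Set (Fin m → ℝ)} (hS : IsSL S) (hT : IsSL T) : IsSL (S ∩ T) := by
  obtain ⟨P, rfl⟩ := hS; obtain ⟨Q, rfl⟩ := hT
  refine ⟨P.flatMap fun p => Q.map fun q => p.inter q, ?_⟩
  ext x
  simp only [Set.mem_inter_iff, uSet, Set.mem_setOf_eq, List.mem_flatMap, List.mem_map]
  constructor
  · rintro ⟨⟨p, hp, hxp⟩, ⟨q, hq, hxq⟩⟩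
    exact ⟨p.inter q, ⟨p, hp, q, hq, rfl⟩, by rw [Poly.inter_set]; exact ⟨hxp, hxq⟩⟩
  · rintro ⟨r, ⟨p, hp, q, hq, rfl⟩, hx⟩
    rw [Poly.inter_set] at hx
    exact ⟨⟨p, hp, hx.1⟩, ⟨q, hq, hx.2⟩⟩

lemma IsSL.poly (p : Poly m) : IsSL p.set := ⟨[p], by ext x; simp [uSet]⟩

lemma IsSL.biUnion {ι : Type*} (s : Finset ι) (f : ι → Set (Fin m → ℝ))
    (hf : ∀ i ∈ s, IsSL (f i)) : IsSL (⋃ i ∈ s, f i) := by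
  classical
  induction s using Finset.induction_on with
  | empty => simpa using IsSL.empty
  | insert a s hni ih =>
    rw [Finset.set_biUnion_insert]
    exact (hf a (Finset.mem_insert_self a s)).union
      (ih fun i hi => hf i (Finset.mem_insert_of_mem hi))

lemma IsSL.iUnion_fintype {ι : Type*} [Fintype ι] (f : ι → Set (Fin m → ℝ))
    (hf : ∀ i, IsSL (f i)) : IsSL (⋃ i, f i) := by
  have : (⋃ i, f i) = ⋃ i ∈ (Finset.univ : Finset ι), f i := by simp
  rw [this]; exact IsSL.biUnion _ _ fun i _ => hf i


lemma sum_coord (i0 : Fin m) (c : ℝ) (y : Fin m → ℝ) :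
    ∑ i, (if i = i0 then c else 0) * y i = c * y i0 := by
  rw [show (fun i => (if i = i0 then c else 0) * y i) =
      (fun i => if i = i0 then c * y i else 0) from funext fun i => by split <;> simp]
  simp [Finset.sum_ite_eq' Finset.univ i0 (fun i => c * y i)]

noncomputable def coordPoly (i0 : Fin m) : Poly m :=
  ([((fun i => if i = i0 then (1:ℝ) else 0), 0),
    ((fun i => if i = i0 then (-1:ℝ) else 0), 0)], [])

lemma coordPoly_set (i0 : Fin m) : (coordPoly i0).set = {y | y i0 = 0} := by
  ext y
  simp only [Poly.set, coordPoly, Set.mem_setOf_eq, List.mem_cons, List.not_mem_nil, or_false,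
    forall_eq_or_imp, forall_eq, evalC, sum_coord, List.mem_singleton]
  constructor
  · rintro ⟨⟨h1, h2⟩, -⟩
    linarith
  · intro h
    refine ⟨⟨?_, ?_⟩, by simp⟩ <;> simp [h]

noncomputable def zeroAt (i0 : Fin m) (x : Fin m → ℝ) : Fin m → ℝ := Function.update x i0 0

lemma zeroAt_image (i0 : Fin m) (S : Set (Fin m → ℝ)) :
    zeroAt i0 '' S = {y | y i0 = 0 ∧ ∃ t, Function.update y i0 t ∈ S} := by
  ext y
  constructor
  · rintro ⟨x, hx, rfl⟩
    refine ⟨by simp [zeroAt], x i0, ?_⟩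
    rw [show Function.update (zeroAt i0 x) i0 (x i0) = x from ?_]
    · exact hx
    · unfold zeroAt
      rw [Function.update_idem, Function.update_eq_self]
  · rintro ⟨h0, t, ht⟩
    refine ⟨Function.update y i0 t, ht, ?_⟩
    unfold zeroAt
    rw [Function.update_idem]
    exact Function.update_eq_self_iff.2 h0.symm

lemma IsSL.zeroAt_image {S : Set (Fin m → ℝ)} (i0 : Fin m) (hS : IsSL S) :
    IsSL (zeroAt i0 '' S) := by
  obtain ⟨P, rfl⟩ := hS
  refine ⟨P.map fun p => (elim i0 p).inter (coordPoly i0), ?_⟩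
  rw [ReluSL.zeroAt_image]
  ext y
  simp only [Set.mem_setOf_eq, uSet, List.mem_map]
  constructor
  · rintro ⟨h0, t, p, hp, hyp⟩
    refine ⟨_, ⟨p, hp, rfl⟩, ?_⟩
    have : y ∈ ((elim i0 p).inter (coordPoly i0)).set := by
      rw [Poly.inter_set]
      exact ⟨(elim_set i0 p y).2 ⟨t, hyp⟩, by rw [coordPoly_set]; exact h0⟩
    exact this
  · rintro ⟨r, ⟨p, hp, rfl⟩, hy⟩
    have hy' : y ∈ (elim i0 p).set ∩ (coordPoly i0).set := by
      rw [← Poly.inter_set]; exact hy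
    obtain ⟨hy1, hy2⟩ := hy'
    rw [coordPoly_set] at hy2
    obtain ⟨t, ht⟩ := (elim_set i0 p y).1 hy1
    exact ⟨hy2, t, p, hp, ht⟩

noncomputable def zeros : List (Fin m) → (Fin m → ℝ) → Fin m → ℝ
  | [], x => x
  | i :: J, x => Function.update (zeros J x) i 0

lemma zeros_apply (J : List (Fin m)) (x : Fin m → ℝ) (i : Fin m) :
    zeros J x i = if i ∈ J then 0 else x i := by
  induction J with
  | nil => simp [zeros]
  | cons j J ih =>
    show Function.update (zeros J x) j 0 i = _
    rw [Function.update_apply, ih]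
    by_cases h : i = j <;> simp [h, List.mem_cons]

lemma IsSL.zeros_image {S : Set (Fin m → ℝ)} (J : List (Fin m)) (hS : IsSL S) :
    IsSL (zeros J '' S) := by
  induction J with
  | nil =>
    have h : zeros ([] : List (Fin m)) '' S = S := by
      rw [show zeros ([] : List (Fin m)) = id from rfl, Set.image_id]
    rwa [h]
  | cons i J ih =>
    have h : zeros (i :: J) '' S = zeroAt i '' (zeros J '' S) := by
      rw [Set.image_image]; rfl
    rw [h]
    exact ih.zeroAt_image i

noncomputable def orthPoly (σ : Fin m → Bool) : Poly m :=
  (List.ofFn (fun i => ((fun j => if j = i then (if σ i then (-1:ℝ) else 1) else 0), (0:ℝ))), [])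

lemma orthPoly_set (σ : Fin m → Bool) :
    (orthPoly σ).set = {x | ∀ i, if σ i then 0 ≤ x i else x i ≤ 0} := by
  ext x
  simp only [Poly.set, orthPoly, Set.mem_setOf_eq, List.forall_mem_ofFn_iff, List.not_mem_nil,
    false_imp_iff, forall_const, and_true]
  apply forall_congr'
  intro i
  rw [evalC]
  simp only [sum_coord]
  by_cases h : σ i <;> simp [h] <;> constructor <;> intro <;> linarith

lemma relu_image_isSL {n : ℕ} {X : Set (Fin n → ℝ)} (hX : IsSL X) : IsSL (relu n '' X) := by
  have hcov : X = ⋃ σ : Fin n → Bool, X ∩ (orthPoly σ).set := by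
    ext x
    simp only [Set.mem_iUnion, Set.mem_inter_iff]
    constructor
    · intro hx
      refine ⟨fun i => decide (0 ≤ x i), hx, ?_⟩
      rw [orthPoly_set]
      intro i
      by_cases h : 0 ≤ x i
      · simp [h]
      · have hx0 : x i ≤ 0 := le_of_lt (not_le.1 h)
        simpa [h] using hx0
    · rintro ⟨σ, hx, -⟩
      exact hx
  rw [hcov, Set.image_iUnion]
  apply IsSL.iUnion_fintype
  intro σ
  have himg : relu n '' (X ∩ (orthPoly σ).set) =
      zeros ((List.finRange n).filter fun i => !σ i) '' (X ∩ (orthPoly σ).set) := by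
    apply Set.image_congr
    intro x hx
    have hx2 := hx.2
    rw [orthPoly_set] at hx2
    funext i
    show max (x i) 0 = _
    rw [zeros_apply]
    simp only [List.mem_filter, List.mem_finRange, true_and, Bool.not_eq_true']
    by_cases h : σ i
    · have h0 : 0 ≤ x i := by simpa [h] using hx2 i
      simp [h, max_eq_left h0]
    · have hf : σ i = false := by simpa using h
      have h0 : x i ≤ 0 := by simpa [hf] using hx2 i
      simp [hf, max_eq_right h0]
  rw [himg]
  exact (hX.inter (IsSL.poly _)).zeros_image _

lemma genPoly_eq (n kk kk' : ℕ) (a : Fin kk → Fin n → ℝ) (b : Fin kk → ℝ)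
    (c : Fin kk' → Fin n → ℝ) (d : Fin kk' → ℝ) :
    genPoly n kk kk' a b c d =
      Poly.set (List.ofFn (fun j => (a j, b j)), List.ofFn (fun j => (c j, d j))) := by
  ext x
  simp [genPoly, Poly.set, List.forall_mem_ofFn_iff, evalC]

lemma uSet_ofFn {N : ℕ} (g : Fin N → Poly m) : uSet (List.ofFn g) = ⋃ s, (g s).set := by
  ext x
  simp only [uSet, Set.mem_setOf_eq, List.mem_ofFn, Set.mem_iUnion]
  constructor
  · rintro ⟨p, ⟨s, rfl⟩, h⟩
    exact ⟨s, h⟩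
  · rintro ⟨s, h⟩
    exact ⟨g s, ⟨s, rfl⟩, h⟩

lemma uSet_eq_iUnion_get (P : List (Poly m)) :
    uSet P = ⋃ t : Fin P.length, (P.get t).set := by
  ext x
  simp only [uSet, Set.mem_setOf_eq, Set.mem_iUnion]
  constructor
  · rintro ⟨p, hp, h⟩
    obtain ⟨t, rfl⟩ := List.mem_iff_get.1 hp
    exact ⟨t, h⟩
  · rintro ⟨t, h⟩
    exact ⟨P.get t, List.get_mem P t, h⟩


end ReluSL


theorem relu_preserves_union_polyhedra (n N : ℕ)
    (k k' : Fin N → ℕ)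
    (a : ∀ s, Fin (k s) → Fin n → ℝ) (b : ∀ s, Fin (k s) → ℝ)
    (c : ∀ s, Fin (k' s) → Fin n → ℝ) (d : ∀ s, Fin (k' s) → ℝ) :
    ∃ (M : ℕ) (l l' : Fin M → ℕ)
      (a' : ∀ t, Fin (l t) → Fin n → ℝ) (b' : ∀ t, Fin (l t) → ℝ)
      (c' : ∀ t, Fin (l' t) → Fin n → ℝ) (d' : ∀ t, Fin (l' t) → ℝ),
      relu n '' (⋃ s, genPoly n (k s) (k' s) (a s) (b s) (c s) (d s)) =
        ⋃ t, genPoly n (l t) (l' t) (a' t) (b' t) (c' t) (d' t) := by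
  have hX : ReluSL.IsSL (⋃ s, genPoly n (k s) (k' s) (a s) (b s) (c s) (d s)) := by
    refine ⟨List.ofFn fun s =>
      ((List.ofFn fun j => (a s j, b s j)), (List.ofFn fun j => (c s j, d s j))), ?_⟩
    rw [ReluSL.uSet_ofFn]
    exact Set.iUnion_congr fun s => ReluSL.genPoly_eq n (k s) (k' s) (a s) (b s) (c s) (d s)
  obtain ⟨P, hP⟩ := ReluSL.relu_image_isSL hX
  refine ⟨P.length, fun t => (P.get t).1.length, fun t => (P.get t).2.length,
    fun t j => ((P.get t).1.get j).1, fun t j => ((P.get t).1.get j).2,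
    fun t j => ((P.get t).2.get j).1, fun t j => ((P.get t).2.get j).2, ?_⟩
  rw [hP, ReluSL.uSet_eq_iUnion_get]
  refine Set.iUnion_congr fun t => ?_
  rw [ReluSL.genPoly_eq]
  simp only [Prod.mk.eta, List.ofFn_get]
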